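/- Entropy bound from area theorem argument (inequality 4.4/eq. ar_4): for a uniformly chosen codeword X of an (n,k) code observed through degraded erasure channels Y(ε) → Y(ε₀) with ε < ε₀, the EXIT function satisfies n·h(ε) ≤ H(X | Y(ε₀))/(ε₀ − ε), where h(ε) = (1/n)·Σᵢ H(Xᵢ | Y_{∼i}(ε)). -/

import Mathlib

open scoped Classical

/-- Probability of the event `{X = b}` under the pmf `p` on a finite sample space. -/
noncomputable def prOf {Ω B : Type*} [Fintype Ω] (p : Ω → ℝ) (X : Ω → B) (b : B) : ℝ :=
  ∑ ω, if X ω = b then p ω else 0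

/-- Conditional Shannon entropy `H(X|Y)` (base 2) of finite random variables given by
functions on a finite sample space with pmf `p`:
`H(X|Y) = Σ_ω p(ω)·log₂(P[Y = Y(ω)] / P[X = X(ω), Y = Y(ω)])`. -/
noncomputable def condEnt {Ω B C : Type*} [Fintype Ω] (p : Ω → ℝ)
    (X : Ω → B) (Y : Ω → C) : ℝ :=
  ∑ ω, p ω * Real.logb 2 (prOf p Y (Y ω) / prOf p (fun ω => (X ω, Y ω)) (X ω, Y ω))

/-- Joint pmf of (uniform codeword of `C`, coupled erasure statuses):
status `0` = not erased in either channel output, status `1` = erased only at level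
`ε₀`, status `2` = erased at both levels; so coordinatewise the `ε`-output erases with
probability `ε` and the `ε₀`-output is its degradation erasing with probability `ε₀`. -/
noncomputable def pCode (n : ℕ) (C : Finset (Fin n → ZMod 2)) (ε ε₀ : ℝ)
    (ω : (Fin n → ZMod 2) × (Fin n → Fin 3)) : ℝ :=
  (if ω.1 ∈ C then (1 : ℝ) / C.card else 0) *
    ∏ j, (if ω.2 j = 2 then ε else if ω.2 j = 1 then ε₀ - ε else 1 - ε₀)

/-- The channel output `Y(ε)`. -/
noncomputable def Yeps (n : ℕ) (ω : (Fin n → ZMod 2) × (Fin n → Fin 3)) :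
    Fin n → Option (ZMod 2) :=
  fun j => if ω.2 j = 2 then none else some (ω.1 j)

/-- The degraded channel output `Y(ε₀)`. -/
noncomputable def Yeps0 (n : ℕ) (ω : (Fin n → ZMod 2) × (Fin n → Fin 3)) :
    Fin n → Option (ZMod 2) :=
  fun j => if ω.2 j = 0 then some (ω.1 j) else none

/-- `Y_{∼i}(ε)`: the output `Y(ε)` with coordinate `i` replaced by an erasure. -/
noncomputable def Ynot (n : ℕ) (i : Fin n) (ω : (Fin n → ZMod 2) × (Fin n → Fin 3)) :
    Fin n → Option (ZMod 2) :=
  fun j => if j = i then none else Yeps n ω j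


open Finset

namespace ExitAux

/-- abstract inner counting bound on one fiber -/
lemma inner_bound {γ : Type*} (D : Finset γ) (α β : γ → ZMod 2) :
    ∑ x ∈ D, ((D.filter fun y => α y = α x).card * (D.filter fun y => β y = β x).card : ℝ) /
      (D.card * (D.filter fun y => α y = α x ∧ β y = β x).card) ≤ (D.card : ℝ) := by
  classical
  rcases D.eq_empty_or_nonempty with rfl | hD
  · simp
  have hDpos : (0:ℝ) < D.card := by exact_mod_cast Finset.card_pos.2 hD
  set a : ZMod 2 → ℕ := fun v => (D.filter fun y => α y = v).card with ha
  set b : ZMod 2 → ℕ := fun w => (D.filter fun y => β y = w).card with hb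
  set c : ZMod 2 → ZMod 2 → ℕ := fun v w => (D.filter fun y => α y = v ∧ β y = w).card with hc
  have grp := Finset.sum_fiberwise_of_maps_to (s := D) (t := (univ : Finset (ZMod 2 × ZMod 2)))
      (g := fun x => (α x, β x)) (fun x _ => Finset.mem_univ _)
      (fun x => ((a (α x) * b (β x) : ℝ)) / (D.card * c (α x) (β x)))
  have hsum : ∑ x ∈ D, ((D.filter fun y => α y = α x).card * (D.filter fun y => β y = β x).card : ℝ) /
      (D.card * (D.filter fun y => α y = α x ∧ β y = β x).card)
      = ∑ p : ZMod 2 × ZMod 2, ∑ x ∈ D.filter (fun x => (α x, β x) = p),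
          ((a (α x) * b (β x) : ℝ)) / (D.card * c (α x) (β x)) := by
    rw [grp]
  rw [hsum]
  have step : ∀ p : ZMod 2 × ZMod 2, ∑ x ∈ D.filter (fun x => (α x, β x) = p),
      ((a (α x) * b (β x) : ℝ)) / (D.card * c (α x) (β x)) ≤ (a p.1 * b p.2 : ℝ) / D.card := by
    intro p
    have hfib : D.filter (fun x => (α x, β x) = p) = D.filter (fun y => α y = p.1 ∧ β y = p.2) := by
      apply Finset.filter_congr; intro x _; constructor
      · intro h; exact ⟨congrArg Prod.fst h, congrArg Prod.snd h⟩
      · intro h; exact Prod.ext h.1 h.2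
    have hconst : ∀ x ∈ D.filter (fun x => (α x, β x) = p),
        ((a (α x) * b (β x) : ℝ)) / (D.card * c (α x) (β x))
          = (a p.1 * b p.2 : ℝ) / (D.card * c p.1 p.2) := by
      intro x hx
      have := (Finset.mem_filter.1 hx).2
      rw [← this]
    rw [Finset.sum_congr rfl hconst, Finset.sum_const, hfib]
    rcases Nat.eq_zero_or_pos (c p.1 p.2) with h0 | hpos
    · rw [hc] at h0 ⊢
      rw [h0]; simp only [h0, Nat.cast_zero, mul_zero, div_zero, smul_zero]
      positivity
    · have : (D.filter fun y => α y = p.1 ∧ β y = p.2).card = c p.1 p.2 := rfl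
      rw [this, nsmul_eq_mul]
      have hcne : (c p.1 p.2 : ℝ) ≠ 0 := by exact_mod_cast hpos.ne'
      apply le_of_eq
      field_simp
  calc ∑ p : ZMod 2 × ZMod 2, ∑ x ∈ D.filter (fun x => (α x, β x) = p),
        ((a (α x) * b (β x) : ℝ)) / (D.card * c (α x) (β x))
      ≤ ∑ p : ZMod 2 × ZMod 2, (a p.1 * b p.2 : ℝ) / D.card :=
        Finset.sum_le_sum fun p _ => step p
    _ = ((∑ v : ZMod 2, (a v : ℝ)) * (∑ w : ZMod 2, (b w : ℝ))) / D.card := by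
        rw [Finset.sum_mul_sum, Fintype.sum_prod_type]
        rw [Finset.sum_div]
        congr 1; ext v
        rw [Finset.sum_div]
    _ = (D.card : ℝ) := by
        have hA : ∑ v : ZMod 2, (a v : ℝ) = D.card := by
          rw [← Nat.cast_sum]
          congr 1
          have := Finset.sum_fiberwise_of_maps_to (s := D) (t := (univ : Finset (ZMod 2)))
            (g := α) (fun x _ => Finset.mem_univ _) (fun _ => (1 : ℕ))
          simpa [Finset.sum_const, ha] using this
        have hB : ∑ w : ZMod 2, (b w : ℝ) = D.card := by
          rw [← Nat.cast_sum]
          congr 1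
          have := Finset.sum_fiberwise_of_maps_to (s := D) (t := (univ : Finset (ZMod 2)))
            (g := β) (fun x _ => Finset.mem_univ _) (fun _ => (1 : ℕ))
          simpa [Finset.sum_const, hb] using this
        rw [hA, hB]
        field_simp


variable {n : ℕ}


variable {n : ℕ} (C : Finset (Fin n → ZMod 2))

/-- number of codewords agreeing with x on A -/
noncomputable def Ncnt (A : Finset (Fin n)) (x : Fin n → ZMod 2) : ℕ :=
  (C.filter fun y => ∀ j ∈ A, y j = x j).card

/-- H(X | X_A) -/
noncomputable def HA (A : Finset (Fin n)) : ℝ :=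
  ∑ x ∈ C, (1 / (C.card : ℝ)) * Real.logb 2 (Ncnt C A x)

lemma Ncnt_pos {A : Finset (Fin n)} {x : Fin n → ZMod 2} (hx : x ∈ C) :
    0 < Ncnt C A x := by
  refine Finset.card_pos.2 ⟨x, ?_⟩
  simp [Ncnt, hx]

lemma Ncnt_one_le {A : Finset (Fin n)} {x : Fin n → ZMod 2} (hx : x ∈ C) :
    (1 : ℝ) ≤ (Ncnt C A x : ℝ) := by
  exact_mod_cast Nat.one_le_iff_ne_zero.2 (Ncnt_pos C hx).ne'

lemma Ncnt_anti {A B : Finset (Fin n)} (h : A ⊆ B) (x : Fin n → ZMod 2) :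
    Ncnt C B x ≤ Ncnt C A x := by
  apply Finset.card_le_card
  intro y hy
  simp only [Finset.mem_filter] at hy ⊢
  exact ⟨hy.1, fun j hj => hy.2 j (h hj)⟩

lemma HA_nonneg (A : Finset (Fin n)) : 0 ≤ HA C A := by
  refine Finset.sum_nonneg fun x hx => ?_
  have h1 : (1:ℝ) ≤ (Ncnt C A x : ℝ) := Ncnt_one_le C hx
  have := Real.logb_nonneg (by norm_num : (1:ℝ) < 2) h1
  positivity

lemma HA_anti {A B : Finset (Fin n)} (h : A ⊆ B) : HA C B ≤ HA C A := by
  refine Finset.sum_le_sum fun x hx => ?_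
  have hc : (0:ℝ) ≤ 1 / (C.card : ℝ) := by positivity
  refine mul_le_mul_of_nonneg_left ?_ hc
  refine (Real.logb_le_logb (by norm_num) ?_ ?_).2 ?_
  · exact_mod_cast Ncnt_pos C hx
  · exact lt_of_lt_of_le zero_lt_one (Ncnt_one_le C hx)
  · exact_mod_cast Ncnt_anti C h x

/-- the increment H(X_i | X_A) -/
noncomputable def Dlt (i : Fin n) (A : Finset (Fin n)) : ℝ :=
  HA C A - HA C (insert i A)

lemma Dlt_nonneg (i : Fin n) (A : Finset (Fin n)) : 0 ≤ Dlt C i A :=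
  sub_nonneg.2 (HA_anti C (Finset.subset_insert i A))


variable {n : ℕ}

noncomputable def rho (A : Finset (Fin n)) (x : Fin n → ZMod 2) : Fin n → ZMod 2 :=
  fun k => if k ∈ A then x k else 0

lemma rho_eq_iff {A : Finset (Fin n)} {x y : Fin n → ZMod 2} :
    rho A y = rho A x ↔ ∀ k ∈ A, y k = x k := by
  constructor
  · intro h k hk
    have := congrFun h k
    simpa [rho, hk] using this
  · intro h; funext k; by_cases hk : k ∈ A <;> simp [rho, hk]
    exact h k hk

lemma count_le (C : Finset (Fin n → ZMod 2)) (i j : Fin n) (A : Finset (Fin n)) :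
    ∑ x ∈ C, ((Ncnt C (insert i A) x : ℝ) * (Ncnt C (insert j A) x)) /
      ((Ncnt C A x) * (Ncnt C (insert i (insert j A)) x)) ≤ (C.card : ℝ) := by
  have hgrp := Finset.sum_fiberwise_of_maps_to (s := C)
      (t := (univ : Finset (Fin n → ZMod 2))) (g := rho A) (fun _ _ => Finset.mem_univ _)
      (fun x => ((Ncnt C (insert i A) x : ℝ) * (Ncnt C (insert j A) x)) /
        ((Ncnt C A x) * (Ncnt C (insert i (insert j A)) x)))
  rw [← hgrp]
  have hcard : (C.card : ℝ) = ∑ b : (Fin n → ZMod 2), ((C.filter fun x => rho A x = b).card : ℝ) := by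
    have := Finset.sum_fiberwise_of_maps_to (s := C)
      (t := (univ : Finset (Fin n → ZMod 2))) (g := rho A) (fun _ _ => Finset.mem_univ _)
      (fun _ => (1:ℝ))
    simp only [Finset.sum_const, nsmul_eq_mul, mul_one] at this
    exact this.symm
  rw [hcard]
  apply Finset.sum_le_sum
  intro b _
  set D := C.filter fun x => rho A x = b with hD
  have key : ∀ x ∈ D,
      ((Ncnt C (insert i A) x : ℝ) * (Ncnt C (insert j A) x)) /
        ((Ncnt C A x) * (Ncnt C (insert i (insert j A)) x))
      = ((D.filter fun y => y i = x i).card * (D.filter fun y => y j = x j).card : ℝ) /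
        (D.card * (D.filter fun y => y i = x i ∧ y j = x j).card) := by
    intro x hx
    have hxb : rho A x = b := (Finset.mem_filter.1 hx).2
    have hA : Ncnt C A x = D.card := by
      unfold Ncnt
      congr 1
      apply Finset.filter_congr
      intro y _
      rw [← hxb, ← rho_eq_iff]
    have hiA : Ncnt C (insert i A) x = (D.filter fun y => y i = x i).card := by
      unfold Ncnt
      rw [hD, Finset.filter_filter]
      congr 1
      apply Finset.filter_congr
      intro y _
      simp only [Finset.forall_mem_insert, ← hxb, ← @rho_eq_iff n A x y]
      tauto
    have hjA : Ncnt C (insert j A) x = (D.filter fun y => y j = x j).card := by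
      unfold Ncnt
      rw [hD, Finset.filter_filter]
      congr 1
      apply Finset.filter_congr
      intro y _
      simp only [Finset.forall_mem_insert, ← hxb, ← @rho_eq_iff n A x y]
      tauto
    have hijA : Ncnt C (insert i (insert j A)) x
        = (D.filter fun y => y i = x i ∧ y j = x j).card := by
      unfold Ncnt
      rw [hD, Finset.filter_filter]
      congr 1
      apply Finset.filter_congr
      intro y _
      simp only [Finset.forall_mem_insert, ← hxb, ← @rho_eq_iff n A x y]
      tauto
    rw [hA, hiA, hjA, hijA]
  rw [Finset.sum_congr rfl key]
  exact inner_bound D (fun y => y i) (fun y => y j)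


variable {n : ℕ}

lemma submod (C : Finset (Fin n → ZMod 2)) (i j : Fin n) (A : Finset (Fin n)) :
    HA C (insert j A) - HA C (insert i (insert j A)) ≤ HA C A - HA C (insert i A) := by
  have hlog2 : (0:ℝ) < Real.log 2 := Real.log_pos (by norm_num)
  set S : Finset (Fin n) → ℝ := fun B => ∑ x ∈ C, Real.logb 2 (Ncnt C B x) with hS
  have hHA : ∀ B, HA C B = (1 / (C.card : ℝ)) * S B := by
    intro B; rw [HA, hS, Finset.mul_sum]
  have key : S (insert i A) + S (insert j A) - S A - S (insert i (insert j A)) ≤ 0 := by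
    have e1 : S (insert i A) + S (insert j A) - S A - S (insert i (insert j A))
        = ∑ x ∈ C, (Real.logb 2 (Ncnt C (insert i A) x) + Real.logb 2 (Ncnt C (insert j A) x)
            - Real.logb 2 (Ncnt C A x) - Real.logb 2 (Ncnt C (insert i (insert j A)) x)) := by
      rw [hS]
      simp only [← Finset.sum_add_distrib, ← Finset.sum_sub_distrib]
    rw [e1]
    have pointwise : ∀ x ∈ C,
        Real.logb 2 (Ncnt C (insert i A) x) + Real.logb 2 (Ncnt C (insert j A) x)
          - Real.logb 2 (Ncnt C A x) - Real.logb 2 (Ncnt C (insert i (insert j A)) x)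
        ≤ (((Ncnt C (insert i A) x : ℝ) * (Ncnt C (insert j A) x)) /
            ((Ncnt C A x) * (Ncnt C (insert i (insert j A)) x)) - 1) / Real.log 2 := by
      intro x hx
      have ha : (0:ℝ) < (Ncnt C (insert i A) x : ℝ) := by exact_mod_cast Ncnt_pos C hx
      have hb : (0:ℝ) < (Ncnt C (insert j A) x : ℝ) := by exact_mod_cast Ncnt_pos C hx
      have hc : (0:ℝ) < (Ncnt C A x : ℝ) := by exact_mod_cast Ncnt_pos C hx
      have hd : (0:ℝ) < (Ncnt C (insert i (insert j A)) x : ℝ) := by exact_mod_cast Ncnt_pos C hx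
      have heq : Real.logb 2 (Ncnt C (insert i A) x) + Real.logb 2 (Ncnt C (insert j A) x)
          - Real.logb 2 (Ncnt C A x) - Real.logb 2 (Ncnt C (insert i (insert j A)) x)
          = Real.log (((Ncnt C (insert i A) x : ℝ) * (Ncnt C (insert j A) x)) /
            ((Ncnt C A x) * (Ncnt C (insert i (insert j A)) x))) / Real.log 2 := by
        rw [Real.log_div (by positivity) (by positivity),
          Real.log_mul ha.ne' hb.ne', Real.log_mul hc.ne' hd.ne']
        simp only [Real.logb]
        ring
      rw [heq]
      exact div_le_div_of_nonneg_right (Real.log_le_sub_one_of_pos (by positivity)) hlog2.le |>.trans_eq rfl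
    calc ∑ x ∈ C, (Real.logb 2 (Ncnt C (insert i A) x) + Real.logb 2 (Ncnt C (insert j A) x)
            - Real.logb 2 (Ncnt C A x) - Real.logb 2 (Ncnt C (insert i (insert j A)) x))
        ≤ ∑ x ∈ C, (((Ncnt C (insert i A) x : ℝ) * (Ncnt C (insert j A) x)) /
            ((Ncnt C A x) * (Ncnt C (insert i (insert j A)) x)) - 1) / Real.log 2 :=
          Finset.sum_le_sum pointwise
      _ = ((∑ x ∈ C, ((Ncnt C (insert i A) x : ℝ) * (Ncnt C (insert j A) x)) /
            ((Ncnt C A x) * (Ncnt C (insert i (insert j A)) x))) - C.card) / Real.log 2 := by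
          rw [← Finset.sum_div, Finset.sum_sub_distrib, Finset.sum_const, nsmul_eq_mul, mul_one]
      _ ≤ 0 := by
          apply div_nonpos_of_nonpos_of_nonneg ?_ hlog2.le
          rw [sub_nonpos]
          exact count_le C i j A
  rw [hHA, hHA, hHA, hHA, ← mul_sub, ← mul_sub]
  apply mul_le_mul_of_nonneg_left (by linarith) (by positivity)


variable {n : ℕ}

noncomputable def Wf (S : Finset (Fin n)) (c : Finset (Fin n) → ℝ) (t : ℝ) : ℝ :=
  ∑ A ∈ S.powerset, (1-t)^A.card * t^(S.card - A.card) * c A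

lemma hasDerivAt_Wf (S : Finset (Fin n)) (c : Finset (Fin n) → ℝ) (t : ℝ) :
    HasDerivAt (Wf S c)
      (∑ j ∈ S, ∑ A ∈ (S.erase j).powerset,
        (1-t)^A.card * t^(S.card - 1 - A.card) * (c A - c (insert j A))) t := by
  have hterm : ∀ A ∈ S.powerset, HasDerivAt
      (fun t : ℝ => (1-t)^A.card * t^(S.card - A.card) * c A)
      ((((A.card : ℝ) * (1-t)^(A.card-1) * (-1)) * t^(S.card - A.card)
        + (1-t)^A.card * ((S.card - A.card : ℕ) * t^(S.card - A.card - 1))) * c A) t := by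
    intro A _
    have h1 : HasDerivAt (fun t : ℝ => (1-t)^A.card)
        ((A.card : ℝ) * (1-t)^(A.card-1) * (-1)) t := by
      have := ((hasDerivAt_id t).const_sub 1).fun_pow A.card
      simpa using this
    have h2 : HasDerivAt (fun t : ℝ => t^(S.card - A.card))
        (((S.card - A.card : ℕ) : ℝ) * t^(S.card - A.card - 1)) t := by
      simpa using hasDerivAt_pow (S.card - A.card) t
    exact (h1.mul h2).mul_const (c A)
  have hsum := HasDerivAt.fun_sum hterm
  refine hsum.congr_deriv ?_
  symm
  -- now prove the combinatorial identity
  have R1 : ∑ j ∈ S, ∑ A ∈ (S.erase j).powerset,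
        (1-t)^A.card * t^(S.card - 1 - A.card) * c A
      = ∑ A ∈ S.powerset, ((S \ A).card : ℝ) *
          ((1-t)^A.card * t^(S.card - 1 - A.card) * c A) := by
    rw [Finset.sum_comm' (s := S) (t := fun j => (S.erase j).powerset)
      (t' := S.powerset) (s' := fun A => S \ A)]
    · apply Finset.sum_congr rfl
      intro A _
      rw [Finset.sum_const, nsmul_eq_mul]
    · intro j A
      simp only [Finset.mem_powerset, Finset.subset_erase, Finset.mem_sdiff]
      tauto
  have R2 : ∑ j ∈ S, ∑ A ∈ (S.erase j).powerset,
        (1-t)^A.card * t^(S.card - 1 - A.card) * c (insert j A)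
      = ∑ B ∈ S.powerset, (B.card : ℝ) *
          ((1-t)^(B.card - 1) * t^(S.card - B.card) * c B) := by
    have inner : ∀ j ∈ S, ∑ A ∈ (S.erase j).powerset,
        (1-t)^A.card * t^(S.card - 1 - A.card) * c (insert j A)
        = ∑ B ∈ S.powerset.filter (fun B => j ∈ B),
            (1-t)^(B.card - 1) * t^(S.card - B.card) * c B := by
      intro j hj
      apply Finset.sum_nbij' (i := fun A => insert j A) (j := fun B => B.erase j)
      · intro A hA
        simp only [Finset.mem_powerset, Finset.subset_erase] at hA
        simp only [Finset.mem_filter, Finset.mem_powerset]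
        exact ⟨Finset.insert_subset hj hA.1, Finset.mem_insert_self j A⟩
      · intro B hB
        simp only [Finset.mem_filter, Finset.mem_powerset] at hB
        simp only [Finset.mem_powerset, Finset.subset_erase]
        exact ⟨(Finset.erase_subset j B).trans hB.1, Finset.notMem_erase j B⟩
      · intro A hA
        simp only [Finset.mem_powerset, Finset.subset_erase] at hA
        exact Finset.erase_insert hA.2
      · intro B hB
        simp only [Finset.mem_filter, Finset.mem_powerset] at hB
        exact Finset.insert_erase hB.2
      · intro A hA
        simp only [Finset.mem_powerset, Finset.subset_erase] at hA
        have hcard : (insert j A).card = A.card + 1 := Finset.card_insert_of_notMem hA.2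
        have e1 : A.card + 1 - 1 = A.card := by omega
        have e2 : S.card - (A.card + 1) = S.card - 1 - A.card := by omega
        rw [hcard, e1, e2]
    rw [Finset.sum_congr rfl inner]
    rw [Finset.sum_comm' (s := S) (t := fun j => S.powerset.filter (fun B => j ∈ B))
      (t' := S.powerset) (s' := fun B => B ∩ S)]
    · apply Finset.sum_congr rfl
      intro B hB
      rw [Finset.sum_const, nsmul_eq_mul]
      congr 2
      rw [Finset.inter_eq_left.2 (Finset.mem_powerset.1 hB)]
    · intro j B
      simp only [Finset.mem_filter, Finset.mem_powerset, Finset.mem_inter]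
      tauto
  have e : ∀ A ∈ S.powerset,
      ((S \ A).card : ℝ) * ((1-t)^A.card * t^(S.card - 1 - A.card) * c A)
        - (A.card : ℝ) * ((1-t)^(A.card - 1) * t^(S.card - A.card) * c A)
      = (((A.card : ℝ) * (1-t)^(A.card-1) * (-1)) * t^(S.card - A.card)
        + (1-t)^A.card * ((S.card - A.card : ℕ) * t^(S.card - A.card - 1))) * c A := by
    intro A hA
    have hAS : A ⊆ S := Finset.mem_powerset.1 hA
    have h1 : (S \ A).card = S.card - A.card := Finset.card_sdiff_of_subset hAS
    have h2 : S.card - A.card - 1 = S.card - 1 - A.card := by omega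
    rw [h1, h2]
    ring
  calc ∑ j ∈ S, ∑ A ∈ (S.erase j).powerset,
        (1-t)^A.card * t^(S.card - 1 - A.card) * (c A - c (insert j A))
      = (∑ j ∈ S, ∑ A ∈ (S.erase j).powerset, (1-t)^A.card * t^(S.card - 1 - A.card) * c A)
        - ∑ j ∈ S, ∑ A ∈ (S.erase j).powerset,
            (1-t)^A.card * t^(S.card - 1 - A.card) * c (insert j A) := by
        rw [← Finset.sum_sub_distrib]
        apply Finset.sum_congr rfl
        intro j _
        rw [← Finset.sum_sub_distrib]
        apply Finset.sum_congr rfl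
        intro A _
        ring
    _ = ∑ A ∈ S.powerset, (((A.card : ℝ) * (1-t)^(A.card-1) * (-1)) * t^(S.card - A.card)
          + (1-t)^A.card * ((S.card - A.card : ℕ) * t^(S.card - A.card - 1))) * c A := by
        rw [R1, R2, ← Finset.sum_sub_distrib]
        exact Finset.sum_congr rfl e


variable {n : ℕ}

noncomputable def Ff (C : Finset (Fin n → ZMod 2)) : ℝ → ℝ := Wf univ (HA C)

noncomputable def Gf (C : Finset (Fin n → ZMod 2)) (t : ℝ) : ℝ :=
  ∑ i : Fin n, Wf (univ.erase i) (Dlt C i) t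

lemma hasDerivAt_Ff (C : Finset (Fin n → ZMod 2)) (t : ℝ) :
    HasDerivAt (Ff C) (Gf C t) t := by
  have h := hasDerivAt_Wf (univ : Finset (Fin n)) (HA C) t
  convert h using 1
  · rfl
  unfold Gf Wf
  apply Finset.sum_congr rfl
  intro i _
  apply Finset.sum_congr rfl
  intro A hA
  have hcard : (univ.erase i).card = (univ : Finset (Fin n)).card - 1 :=
    Finset.card_erase_of_mem (Finset.mem_univ i)
  have he : (univ.erase i).card - A.card = (univ : Finset (Fin n)).card - 1 - A.card := by
    rw [hcard]
  rw [he]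
  rfl

lemma hasDerivAt_Gf (C : Finset (Fin n → ZMod 2)) (t : ℝ) :
    HasDerivAt (Gf C)
      (∑ i : Fin n, ∑ j ∈ univ.erase i, ∑ A ∈ ((univ.erase i).erase j).powerset,
        (1-t)^A.card * t^((univ.erase i).card - 1 - A.card)
          * (Dlt C i A - Dlt C i (insert j A))) t := by
  apply HasDerivAt.fun_sum
  intro i _
  exact hasDerivAt_Wf (univ.erase i) (Dlt C i) t

lemma Gf_deriv_nonneg (C : Finset (Fin n → ZMod 2)) {t : ℝ} (h0 : 0 ≤ t) (h1 : t ≤ 1) :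
    0 ≤ ∑ i : Fin n, ∑ j ∈ univ.erase i, ∑ A ∈ ((univ.erase i).erase j).powerset,
        (1-t)^A.card * t^((univ.erase i).card - 1 - A.card)
          * (Dlt C i A - Dlt C i (insert j A)) := by
  apply Finset.sum_nonneg; intro i _
  apply Finset.sum_nonneg; intro j _
  apply Finset.sum_nonneg; intro A _
  have hsub : 0 ≤ Dlt C i A - Dlt C i (insert j A) := by
    have := submod C i j A
    unfold Dlt
    linarith
  have h1t : (0:ℝ) ≤ 1 - t := by linarith
  positivity

lemma Ff_nonneg (C : Finset (Fin n → ZMod 2)) {t : ℝ} (h0 : 0 ≤ t) (h1 : t ≤ 1) :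
    0 ≤ Ff C t := by
  unfold Ff Wf
  apply Finset.sum_nonneg; intro A _
  have h1t : (0:ℝ) ≤ 1 - t := by linarith
  have := HA_nonneg C A
  positivity

theorem abstract_bound (C : Finset (Fin n → ZMod 2)) {ε ε₀ : ℝ}
    (h0 : 0 ≤ ε) (h01 : ε < ε₀) (h1 : ε₀ ≤ 1) :
    (ε₀ - ε) * Gf C ε ≤ Ff C ε₀ := by
  have hcont : Continuous (Ff C) := by
    rw [continuous_iff_continuousAt]
    intro x
    exact (hasDerivAt_Ff C x).differentiableAt.continuousAt
  obtain ⟨c, hc, hslope⟩ := exists_hasDerivAt_eq_slope (Ff C) (Gf C) h01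
    (hcont.continuousOn) (fun x _ => hasDerivAt_Ff C x)
  have hmono : MonotoneOn (Gf C) (Set.Icc ε ε₀) := by
    apply monotoneOn_of_deriv_nonneg (convex_Icc ε ε₀)
    · apply Continuous.continuousOn
      rw [continuous_iff_continuousAt]
      intro x
      exact (hasDerivAt_Gf C x).differentiableAt.continuousAt
    · intro x _
      exact (hasDerivAt_Gf C x).differentiableAt.differentiableWithinAt
    · intro x hx
      rw [interior_Icc] at hx
      rw [(hasDerivAt_Gf C x).deriv]
      exact Gf_deriv_nonneg C (h0.trans hx.1.le) (hx.2.le.trans h1)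
  have hGle : Gf C ε ≤ Gf C c :=
    hmono (Set.mem_Icc.2 ⟨le_refl _, h01.le⟩)
      (Set.mem_Icc.2 ⟨hc.1.le, hc.2.le⟩) hc.1.le
  have hFε : 0 ≤ Ff C ε := Ff_nonneg C h0 (h01.le.trans h1)
  have hpos : (0:ℝ) < ε₀ - ε := by linarith
  have : Gf C c = (Ff C ε₀ - Ff C ε) / (ε₀ - ε) := hslope
  have h2 : (ε₀ - ε) * Gf C c = Ff C ε₀ - Ff C ε := by
    rw [this]; field_simp
  nlinarith [mul_le_mul_of_nonneg_left hGle hpos.le]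



/-- real-valued indicator -/
noncomputable def ind (P : Prop) : ℝ := if P then 1 else 0

lemma ind_nonneg (P : Prop) : 0 ≤ ind P := by unfold ind; split <;> norm_num

lemma ite_eq_mul_ind (P : Prop) [Decidable P] (a : ℝ) : (if P then a else 0) = a * ind P := by
  unfold ind; split_ifs with h1 <;> simp

lemma ind_and (P Q : Prop) : ind (P ∧ Q) = ind P * ind Q := by
  unfold ind; by_cases hP : P <;> by_cases hQ : Q <;> simp [hP, hQ]

lemma ind_congr {P Q : Prop} (h : P ↔ Q) : ind P = ind Q := by unfold ind; simp [h]

lemma ind_forall {α : Type*} [Fintype α] (p : α → Prop) :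
    ind (∀ j, p j) = ∏ j, ind (p j) := by
  by_cases h : ∀ j, p j
  · have : ∀ j, ind (p j) = 1 := fun j => by simp [ind, h j]
    simp [ind, h, this]
  · push_neg at h
    obtain ⟨j, hj⟩ := h
    rw [Finset.prod_eq_zero (Finset.mem_univ j) (by simp [ind, hj])]
    have hna : ¬ ∀ j, p j := fun hall => hj (hall j)
    simp [ind, hna]

/-- sum over all functions of a product of per-coordinate terms -/
lemma sum_fn_prod {n m : ℕ} (φ : Fin n → Fin m → ℝ) :
    ∑ s : Fin n → Fin m, ∏ j, φ j (s j) = ∏ j, ∑ v, φ j v := by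
  rw [Finset.prod_univ_sum]
  rw [Fintype.piFinset_univ]

variable {n : ℕ} (C : Finset (Fin n → ZMod 2)) (ε ε₀ : ℝ)

noncomputable def uC (x : Fin n → ZMod 2) : ℝ := if x ∈ C then (1 : ℝ) / C.card else 0

noncomputable def wE (v : Fin 3) : ℝ := if v = 2 then ε else if v = 1 then ε₀ - ε else 1 - ε₀

noncomputable def qE (s : Fin n → Fin 3) : ℝ := ∏ j, wE ε ε₀ (s j)

lemma pCode_eq (ω : (Fin n → ZMod 2) × (Fin n → Fin 3)) :
    pCode n C ε ε₀ ω = uC C ω.1 * qE ε ε₀ ω.2 := rfl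

lemma sum_uC_mul (f : (Fin n → ZMod 2) → ℝ) :
    ∑ x, uC C x * f x = ∑ x ∈ C, (1 / (C.card : ℝ)) * f x := by
  have step : ∀ x, uC C x * f x = if x ∈ C then (1 / (C.card : ℝ)) * f x else 0 := by
    intro x; unfold uC; split_ifs <;> simp
  rw [Finset.sum_congr rfl (fun x _ => step x), Finset.sum_ite_mem, Finset.univ_inter]



variable {n : ℕ} (C : Finset (Fin n → ZMod 2)) (ε ε₀ : ℝ)

noncomputable def A0 (s : Fin n → Fin 3) : Finset (Fin n) :=
  univ.filter (fun j => s j = 0)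

noncomputable def Q0 (s₀ : Fin n → Fin 3) : ℝ := ∏ j, (if s₀ j = 0 then 1-ε₀ else ε₀)

lemma prOf_eq_sum_ind {Ω B : Type*} [Fintype Ω] (p : Ω → ℝ) (X : Ω → B) (b : B) :
    prOf p X b = ∑ ω, p ω * ind (X ω = b) :=
  Finset.sum_congr rfl fun ω _ => ite_eq_mul_ind _ _

lemma opt_ite_eq_iff {α : Type*} (P Q : Prop) [Decidable P] [Decidable Q] (a b : α) :
    ((if P then some a else none) = (if Q then some b else none)) ↔ ((P ↔ Q) ∧ (Q → a = b)) := by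
  by_cases hP : P <;> by_cases hQ : Q <;> simp [hP, hQ]

lemma Yeps0_eq_iff (x x₀ : Fin n → ZMod 2) (s s₀ : Fin n → Fin 3) :
    Yeps0 n (x,s) = Yeps0 n (x₀,s₀) ↔
      ((∀ j, s₀ j = 0 → x j = x₀ j) ∧ (∀ j, (s j = 0 ↔ s₀ j = 0))) := by
  unfold Yeps0
  rw [funext_iff]
  simp only [opt_ite_eq_iff]
  constructor
  · intro h
    exact ⟨fun j => (h j).2, fun j => (h j).1⟩
  · intro h j
    exact ⟨h.2 j, h.1 j⟩

lemma sum_x_factor (P : (Fin n → ZMod 2) → Prop) :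
    ∑ x, uC C x * ind (P x) = ((C.filter P).card : ℝ) / C.card := by
  rw [sum_uC_mul, ← Finset.mul_sum]
  have : ∑ x ∈ C, ind (P x) = ((C.filter P).card : ℝ) := by
    unfold ind
    rw [Finset.sum_boole]
  rw [this]
  ring

lemma sum_x_factorA (A : Finset (Fin n)) (x₀ : Fin n → ZMod 2) :
    ∑ x, uC C x * ind (∀ j ∈ A, x j = x₀ j) = ((Ncnt C A x₀ : ℝ)) / C.card := by
  rw [sum_x_factor]
  congr 2
  unfold Ncnt
  congr 1
  apply Finset.filter_congr_decidable

lemma sum_s_factor (s₀ : Fin n → Fin 3) :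
    ∑ s : Fin n → Fin 3, qE ε ε₀ s * ind (∀ j, (s j = 0 ↔ s₀ j = 0)) = Q0 ε₀ s₀ := by
  have step : ∀ s : Fin n → Fin 3, qE ε ε₀ s * ind (∀ j, (s j = 0 ↔ s₀ j = 0))
      = ∏ j, (wE ε ε₀ (s j) * ind (s j = 0 ↔ s₀ j = 0)) := by
    intro s
    rw [ind_forall, qE, Finset.prod_mul_distrib]
  rw [Finset.sum_congr rfl (fun s _ => step s),
    sum_fn_prod (fun j v => wE ε ε₀ v * ind (v = 0 ↔ s₀ j = 0))]
  unfold Q0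
  apply Finset.prod_congr rfl
  intro j _
  by_cases h : s₀ j = 0 <;>
    · rw [Fin.sum_univ_three]
      norm_num [wE, ind, h, Fin.ext_iff]
      try ring



variable {n : ℕ} (C : Finset (Fin n → ZMod 2)) (ε ε₀ : ℝ)

lemma prY0 (x₀ : Fin n → ZMod 2) (s₀ : Fin n → Fin 3) :
    prOf (pCode n C ε ε₀) (Yeps0 n) (Yeps0 n (x₀, s₀)) =
      ((Ncnt C (A0 s₀) x₀ : ℝ) / C.card) * Q0 ε₀ s₀ := by
  rw [prOf_eq_sum_ind, Fintype.sum_prod_type]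
  have point : ∀ x s, pCode n C ε ε₀ (x,s) * ind (Yeps0 n (x,s) = Yeps0 n (x₀,s₀))
      = (uC C x * ind (∀ j ∈ A0 s₀, x j = x₀ j))
        * (qE ε ε₀ s * ind (∀ j, (s j = 0 ↔ s₀ j = 0))) := by
    intro x s
    have hx : ind (∀ j, s₀ j = 0 → x j = x₀ j) = ind (∀ j ∈ A0 s₀, x j = x₀ j) :=
      ind_congr (by simp [A0])
    rw [pCode_eq, ind_congr (Yeps0_eq_iff x x₀ s s₀), ind_and, hx]
    ring
  rw [Finset.sum_congr rfl (fun x _ => Finset.sum_congr rfl (fun s _ => point x s))]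
  rw [← Finset.sum_mul_sum]
  rw [sum_x_factorA, sum_s_factor]

lemma prPair0 (x₀ : Fin n → ZMod 2) (s₀ : Fin n → Fin 3) :
    prOf (pCode n C ε ε₀) (fun ω => (ω.1, Yeps0 n ω)) (x₀, Yeps0 n (x₀, s₀)) =
      uC C x₀ * Q0 ε₀ s₀ := by
  rw [prOf_eq_sum_ind, Fintype.sum_prod_type]
  have point : ∀ x s, pCode n C ε ε₀ (x,s) * ind ((x, Yeps0 n (x,s)) = (x₀, Yeps0 n (x₀,s₀)))
      = (uC C x * ind (x = x₀)) * (qE ε ε₀ s * ind (∀ j, (s j = 0 ↔ s₀ j = 0))) := by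
    intro x s
    have hiff : ((x, Yeps0 n (x,s)) = (x₀, Yeps0 n (x₀,s₀)))
        ↔ (x = x₀ ∧ (∀ j, (s j = 0 ↔ s₀ j = 0))) := by
      rw [Prod.ext_iff]
      constructor
      · intro ⟨h1, h2⟩
        exact ⟨h1, ((Yeps0_eq_iff x x₀ s s₀).1 h2).2⟩
      · intro ⟨h1, h2⟩
        refine ⟨h1, (Yeps0_eq_iff x x₀ s s₀).2 ⟨fun j _ => by rw [h1], h2⟩⟩
    rw [pCode_eq, ind_congr hiff, ind_and]
    ring
  rw [Finset.sum_congr rfl (fun x _ => Finset.sum_congr rfl (fun s _ => point x s))]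
  rw [← Finset.sum_mul_sum]
  rw [sum_s_factor]
  congr 1
  have : ∀ x, uC C x * ind (x = x₀) = if x = x₀ then uC C x else 0 := by
    intro x; rw [ite_eq_mul_ind]
  rw [Finset.sum_congr rfl (fun x _ => this x)]
  rw [Finset.sum_ite_eq' Finset.univ x₀ (uC C)]
  simp

lemma Q0_ne_zero {s₀ : Fin n → Fin 3} (h0 : 0 ≤ ε) (h01 : ε < ε₀)
    (hq : qE ε ε₀ s₀ ≠ 0) : Q0 ε₀ s₀ ≠ 0 := by
  rw [Q0, Finset.prod_ne_zero_iff]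
  rw [qE, Finset.prod_ne_zero_iff] at hq
  intro j hj
  by_cases h : s₀ j = 0
  · have hw := hq j (Finset.mem_univ j)
    rw [wE, h] at hw
    have e1 : ¬ ((0:Fin 3) = 2) := by decide
    have e2 : ¬ ((0:Fin 3) = 1) := by decide
    rw [if_neg e1, if_neg e2] at hw
    simpa [h] using hw
  · rw [if_neg h]
    exact (lt_of_le_of_lt h0 h01).ne'



variable {n : ℕ} (C : Finset (Fin n → ZMod 2)) (ε ε₀ : ℝ)

lemma fiber_weight0 (A : Finset (Fin n)) :
    ∑ s ∈ univ.filter (fun s : Fin n → Fin 3 => A0 s = A), qE ε ε₀ s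
      = (1-ε₀)^A.card * ε₀^(n - A.card) := by
  rw [Finset.sum_filter]
  have step : ∀ s : Fin n → Fin 3, (if A0 s = A then qE ε ε₀ s else 0)
      = ∏ j, (wE ε ε₀ (s j) * ind (s j = 0 ↔ j ∈ A)) := by
    intro s
    rw [ite_eq_mul_ind]
    have h1 : ind (A0 s = A) = ind (∀ j, (s j = 0 ↔ j ∈ A)) := by
      apply ind_congr
      rw [Finset.ext_iff]
      simp [A0]
    rw [h1, ind_forall, qE, ← Finset.prod_mul_distrib]
  rw [Finset.sum_congr rfl (fun s _ => step s),
    sum_fn_prod (fun j v => wE ε ε₀ v * ind (v = 0 ↔ j ∈ A))]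
  have per : ∀ j, (∑ v, wE ε ε₀ v * ind (v = 0 ↔ j ∈ A)) = (if j ∈ A then 1-ε₀ else ε₀) := by
    intro j
    by_cases h : j ∈ A <;>
      · rw [Fin.sum_univ_three]
        norm_num [wE, ind, h, Fin.ext_iff]
        try ring
  rw [Finset.prod_congr rfl (fun j _ => per j)]
  rw [Finset.prod_ite _ _]
  rw [Finset.prod_const, Finset.prod_const]
  have e1 : univ.filter (fun j => j ∈ A) = A := by ext j; simp
  have e2 : univ.filter (fun j => ¬ j ∈ A) = Aᶜ := by ext j; simp
  rw [e1, e2, Finset.card_compl, Fintype.card_fin]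

theorem condEnt_Y0 (h0 : 0 ≤ ε) (h01 : ε < ε₀) :
    condEnt (pCode n C ε ε₀) Prod.fst (Yeps0 n) =
      ∑ A ∈ (univ : Finset (Fin n)).powerset,
        (1-ε₀)^A.card * ε₀^(n - A.card) * HA C A := by
  unfold condEnt
  rw [Fintype.sum_prod_type]
  have hc0 : ∀ x : Fin n → ZMod 2, x ∈ C → ((C.card : ℝ) ≠ 0) := by
    intro x hx
    have : 0 < C.card := Finset.card_pos.2 ⟨x, hx⟩
    exact_mod_cast this.ne'
  have main : ∀ x s, pCode n C ε ε₀ (x, s) *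
        Real.logb 2 (prOf (pCode n C ε ε₀) (Yeps0 n) (Yeps0 n (x, s)) /
          prOf (pCode n C ε ε₀) (fun ω => (ω.1, Yeps0 n ω)) (x, Yeps0 n (x, s)))
      = uC C x * qE ε ε₀ s * Real.logb 2 (Ncnt C (A0 s) x) := by
    intro x s
    by_cases hp : pCode n C ε ε₀ (x, s) = 0
    · rw [hp]
      rw [pCode_eq] at hp
      rw [hp]
      ring
    · rw [pCode_eq] at hp ⊢
      have hx : x ∈ C := by
        by_contra hc
        rw [uC, if_neg hc, zero_mul] at hp
        exact hp rfl
      have hq : qE ε ε₀ s ≠ 0 := fun h => hp (by rw [h, mul_zero])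
      have hQ : Q0 ε₀ s ≠ 0 := Q0_ne_zero ε ε₀ h0 h01 hq
      have hcc := hc0 x hx
      rw [prY0, prPair0]
      have hN : (0:ℝ) < (Ncnt C (A0 s) x : ℝ) := by
        have : 0 < Ncnt C (A0 s) x := by
          refine Finset.card_pos.2 ⟨x, ?_⟩
          simp [Ncnt, hx]
        exact_mod_cast this
      have harg : ((Ncnt C (A0 s) x : ℝ) / C.card * Q0 ε₀ s) / (uC C x * Q0 ε₀ s)
          = (Ncnt C (A0 s) x : ℝ) := by
        rw [uC, if_pos hx]
        field_simp
      rw [harg]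
  rw [Finset.sum_congr rfl (fun x _ => Finset.sum_congr rfl (fun s _ => main x s))]
  rw [Finset.sum_comm]
  have inner : ∀ s, ∑ x, uC C x * qE ε ε₀ s * Real.logb 2 (Ncnt C (A0 s) x)
      = qE ε ε₀ s * HA C (A0 s) := by
    intro s
    have re : ∀ x, uC C x * qE ε ε₀ s * Real.logb 2 (Ncnt C (A0 s) x)
        = qE ε ε₀ s * (uC C x * Real.logb 2 (Ncnt C (A0 s) x)) := fun x => by ring
    rw [Finset.sum_congr rfl (fun x _ => re x), ← Finset.mul_sum, sum_uC_mul]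
    rfl
  rw [Finset.sum_congr rfl (fun s _ => inner s)]
  rw [← Finset.sum_fiberwise_of_maps_to (s := univ) (t := univ.powerset) (g := A0)
    (fun s _ => Finset.mem_powerset.2 (Finset.filter_subset _ _))
    (fun s => qE ε ε₀ s * HA C (A0 s))]
  apply Finset.sum_congr rfl
  intro A _
  have re2 : ∀ s ∈ univ.filter (fun s : Fin n → Fin 3 => A0 s = A),
      qE ε ε₀ s * HA C (A0 s) = qE ε ε₀ s * HA C A := by
    intro s hs
    rw [(Finset.mem_filter.1 hs).2]
  rw [Finset.sum_congr rfl re2, ← Finset.sum_mul, fiber_weight0]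



variable {n : ℕ} (C : Finset (Fin n → ZMod 2)) (ε ε₀ : ℝ)

noncomputable def Ai (i : Fin n) (s : Fin n → Fin 3) : Finset (Fin n) :=
  univ.filter (fun j => j ≠ i ∧ s j ≠ 2)

noncomputable def Qi (i : Fin n) (s₀ : Fin n → Fin 3) : ℝ :=
  ∏ j, (if j = i then 1 else if s₀ j = 2 then ε else 1-ε)

lemma mem_Ai {i : Fin n} {s : Fin n → Fin 3} {j : Fin n} :
    j ∈ Ai i s ↔ (j ≠ i ∧ s j ≠ 2) := by simp [Ai]

lemma opt_ite_eq_iff' {α : Type*} (P Q : Prop) [Decidable P] [Decidable Q] (a b : α) :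
    ((if P then none else some a) = (if Q then none else some b))
      ↔ ((P ↔ Q) ∧ (¬ Q → a = b)) := by
  by_cases hP : P <;> by_cases hQ : Q <;> simp [hP, hQ]

lemma Ynot_eq_iff (i : Fin n) (x x₀ : Fin n → ZMod 2) (s s₀ : Fin n → Fin 3) :
    Ynot n i (x,s) = Ynot n i (x₀,s₀) ↔
      ((∀ j, (j ≠ i ∧ s₀ j ≠ 2) → x j = x₀ j) ∧ (∀ j, j ≠ i → (s j = 2 ↔ s₀ j = 2))) := by
  unfold Ynot Yeps
  rw [funext_iff]
  constructor
  · intro h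
    constructor
    · rintro j ⟨hji, hs2⟩
      have hj := h j
      rw [if_neg hji, if_neg hji] at hj
      exact ((opt_ite_eq_iff' _ _ _ _).1 hj).2 hs2
    · intro j hji
      have hj := h j
      rw [if_neg hji, if_neg hji] at hj
      exact ((opt_ite_eq_iff' _ _ _ _).1 hj).1
  · rintro ⟨h1, h2⟩ j
    by_cases hj : j = i
    · rw [if_pos hj, if_pos hj]
    · rw [if_neg hj, if_neg hj]
      exact (opt_ite_eq_iff' _ _ _ _).2 ⟨h2 j hj, fun hs2 => h1 j ⟨hj, hs2⟩⟩

lemma sum_s_factor_i (i : Fin n) (s₀ : Fin n → Fin 3) :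
    ∑ s : Fin n → Fin 3, qE ε ε₀ s * ind (∀ j, j ≠ i → (s j = 2 ↔ s₀ j = 2))
      = Qi ε i s₀ := by
  have step : ∀ s : Fin n → Fin 3, qE ε ε₀ s * ind (∀ j, j ≠ i → (s j = 2 ↔ s₀ j = 2))
      = ∏ j, (wE ε ε₀ (s j) * ind (j ≠ i → (s j = 2 ↔ s₀ j = 2))) := by
    intro s
    rw [ind_forall, qE, ← Finset.prod_mul_distrib]
  rw [Finset.sum_congr rfl (fun s _ => step s),
    sum_fn_prod (fun j v => wE ε ε₀ v * ind (j ≠ i → (v = 2 ↔ s₀ j = 2)))]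
  unfold Qi
  apply Finset.prod_congr rfl
  intro j _
  by_cases hj : j = i
  · rw [if_pos hj, Fin.sum_univ_three]
    norm_num [wE, ind, hj, Fin.ext_iff]
    try ring
  · rw [if_neg hj]
    by_cases h2 : s₀ j = 2 <;>
      · rw [Fin.sum_univ_three]
        norm_num [wE, ind, hj, h2, Fin.ext_iff]
        try ring

lemma prYi (i : Fin n) (x₀ : Fin n → ZMod 2) (s₀ : Fin n → Fin 3) :
    prOf (pCode n C ε ε₀) (Ynot n i) (Ynot n i (x₀, s₀)) =
      ((Ncnt C (Ai i s₀) x₀ : ℝ) / C.card) * Qi ε i s₀ := by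
  rw [prOf_eq_sum_ind, Fintype.sum_prod_type]
  have point : ∀ x s, pCode n C ε ε₀ (x,s) * ind (Ynot n i (x,s) = Ynot n i (x₀,s₀))
      = (uC C x * ind (∀ j ∈ Ai i s₀, x j = x₀ j))
        * (qE ε ε₀ s * ind (∀ j, j ≠ i → (s j = 2 ↔ s₀ j = 2))) := by
    intro x s
    have hx : ind (∀ j, (j ≠ i ∧ s₀ j ≠ 2) → x j = x₀ j)
        = ind (∀ j ∈ Ai i s₀, x j = x₀ j) := ind_congr (by simp [Ai])
    rw [pCode_eq, ind_congr (Ynot_eq_iff i x x₀ s s₀), ind_and, hx]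
    ring
  rw [Finset.sum_congr rfl (fun x _ => Finset.sum_congr rfl (fun s _ => point x s))]
  rw [← Finset.sum_mul_sum]
  rw [sum_x_factorA, sum_s_factor_i]

lemma prPairi (i : Fin n) (x₀ : Fin n → ZMod 2) (s₀ : Fin n → Fin 3) :
    prOf (pCode n C ε ε₀) (fun ω => (ω.1 i, Ynot n i ω)) (x₀ i, Ynot n i (x₀, s₀)) =
      ((Ncnt C (insert i (Ai i s₀)) x₀ : ℝ) / C.card) * Qi ε i s₀ := by
  rw [prOf_eq_sum_ind, Fintype.sum_prod_type]
  have point : ∀ x s, pCode n C ε ε₀ (x,s)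
        * ind ((x i, Ynot n i (x,s)) = (x₀ i, Ynot n i (x₀,s₀)))
      = (uC C x * ind (∀ j ∈ insert i (Ai i s₀), x j = x₀ j))
        * (qE ε ε₀ s * ind (∀ j, j ≠ i → (s j = 2 ↔ s₀ j = 2))) := by
    intro x s
    have hiff : ((x i, Ynot n i (x,s)) = (x₀ i, Ynot n i (x₀,s₀)))
        ↔ ((∀ j ∈ insert i (Ai i s₀), x j = x₀ j) ∧ (∀ j, j ≠ i → (s j = 2 ↔ s₀ j = 2))) := by
      rw [Prod.ext_iff]
      simp only [Ynot_eq_iff i x x₀ s s₀, Finset.forall_mem_insert]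
      constructor
      · rintro ⟨h1, h2, h3⟩
        exact ⟨⟨h1, fun j hj => h2 j (mem_Ai.1 hj)⟩, h3⟩
      · rintro ⟨⟨h1, h2⟩, h3⟩
        exact ⟨h1, ⟨fun j hj => h2 j (mem_Ai.2 hj), h3⟩⟩
    rw [pCode_eq, ind_congr hiff, ind_and]
    ring
  rw [Finset.sum_congr rfl (fun x _ => Finset.sum_congr rfl (fun s _ => point x s))]
  rw [← Finset.sum_mul_sum]
  rw [sum_x_factorA, sum_s_factor_i]

lemma Qi_ne_zero {i : Fin n} {s₀ : Fin n → Fin 3} (h0 : 0 ≤ ε) (h01 : ε < ε₀) (h1 : ε₀ ≤ 1)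
    (hq : qE ε ε₀ s₀ ≠ 0) : Qi ε i s₀ ≠ 0 := by
  rw [Qi, Finset.prod_ne_zero_iff]
  rw [qE, Finset.prod_ne_zero_iff] at hq
  intro j hj
  by_cases hji : j = i
  · rw [if_pos hji]; norm_num
  · rw [if_neg hji]
    by_cases h2 : s₀ j = 2
    · rw [if_pos h2]
      have hw := hq j (Finset.mem_univ j)
      rw [wE, if_pos h2] at hw
      exact hw
    · rw [if_neg h2]
      have : (0:ℝ) < 1 - ε := by linarith
      exact this.ne'



variable {n : ℕ} (C : Finset (Fin n → ZMod 2)) (ε ε₀ : ℝ)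

lemma fiber_weight_i (i : Fin n) (A : Finset (Fin n)) (hA : A ⊆ univ.erase i) :
    ∑ s ∈ univ.filter (fun s : Fin n → Fin 3 => Ai i s = A), qE ε ε₀ s
      = (1-ε)^A.card * ε^(n - 1 - A.card) := by
  have hiA : i ∉ A := fun h => (Finset.mem_erase.1 (hA h)).1 rfl
  rw [Finset.sum_filter]
  have step : ∀ s : Fin n → Fin 3, (if Ai i s = A then qE ε ε₀ s else 0)
      = ∏ j, (wE ε ε₀ (s j) * ind ((j ≠ i ∧ s j ≠ 2) ↔ j ∈ A)) := by
    intro s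
    rw [ite_eq_mul_ind]
    have h1 : ind (Ai i s = A) = ind (∀ j, ((j ≠ i ∧ s j ≠ 2) ↔ j ∈ A)) := by
      apply ind_congr
      rw [Finset.ext_iff]
      simp [Ai]
    rw [h1, ind_forall, qE, ← Finset.prod_mul_distrib]
  rw [Finset.sum_congr rfl (fun s _ => step s),
    sum_fn_prod (fun j v => wE ε ε₀ v * ind ((j ≠ i ∧ v ≠ 2) ↔ j ∈ A))]
  have per : ∀ j, (∑ v, wE ε ε₀ v * ind ((j ≠ i ∧ v ≠ 2) ↔ j ∈ A))
      = (if j = i then 1 else if j ∈ A then 1-ε else ε) := by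
    intro j
    by_cases hj : j = i
    · have : j ∉ A := hj ▸ hiA
      rw [if_pos hj, Fin.sum_univ_three]
      norm_num [wE, ind, hj, hiA, Fin.ext_iff]
      try ring
    · rw [if_neg hj]
      by_cases hA2 : j ∈ A <;>
        · rw [Fin.sum_univ_three]
          norm_num [wE, ind, hj, hA2, Fin.ext_iff]
          try ring
  rw [Finset.prod_congr rfl (fun j _ => per j)]
  rw [← Finset.mul_prod_erase univ _ (Finset.mem_univ i), if_pos rfl, one_mul]
  have per2 : ∀ j ∈ univ.erase i, (if j = i then (1:ℝ) else if j ∈ A then 1-ε else ε)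
      = (if j ∈ A then 1-ε else ε) := by
    intro j hj
    rw [if_neg (Finset.mem_erase.1 hj).1]
  rw [Finset.prod_congr rfl per2, Finset.prod_ite _ _, Finset.prod_const, Finset.prod_const]
  have e1 : (univ.erase i).filter (fun j => j ∈ A) = A := by
    ext j
    simp only [Finset.mem_filter]
    constructor
    · exact fun h => h.2
    · exact fun h => ⟨hA h, h⟩
  have e2 : ((univ.erase i).filter (fun j => ¬ j ∈ A)).card = n - 1 - A.card := by
    have : (univ.erase i).filter (fun j => ¬ j ∈ A) = (univ.erase i) \ A := by
      ext j
      simp [Finset.mem_sdiff, Finset.mem_erase, and_comm]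
    rw [this, Finset.card_sdiff_of_subset hA, Finset.card_erase_of_mem (Finset.mem_univ i),
      Finset.card_univ, Fintype.card_fin]
  rw [e1, e2]

theorem condEnt_Yi (i : Fin n) (h0 : 0 ≤ ε) (h01 : ε < ε₀) (h1 : ε₀ ≤ 1) :
    condEnt (pCode n C ε ε₀) (fun ω => ω.1 i) (Ynot n i) =
      ∑ A ∈ (univ.erase i).powerset,
        (1-ε)^A.card * ε^(n - 1 - A.card) * (HA C A - HA C (insert i A)) := by
  unfold condEnt
  rw [Fintype.sum_prod_type]
  have main : ∀ x s, pCode n C ε ε₀ (x, s) *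
        Real.logb 2 (prOf (pCode n C ε ε₀) (Ynot n i) (Ynot n i (x, s)) /
          prOf (pCode n C ε ε₀) (fun ω => (ω.1 i, Ynot n i ω)) (x i, Ynot n i (x, s)))
      = uC C x * qE ε ε₀ s *
          (Real.logb 2 (Ncnt C (Ai i s) x) - Real.logb 2 (Ncnt C (insert i (Ai i s)) x)) := by
    intro x s
    by_cases hp : pCode n C ε ε₀ (x, s) = 0
    · rw [hp]
      rw [pCode_eq] at hp
      rw [hp]
      ring
    · rw [pCode_eq] at hp ⊢
      have hx : x ∈ C := by
        by_contra hc
        rw [uC, if_neg hc, zero_mul] at hp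
        exact hp rfl
      have hq : qE ε ε₀ s ≠ 0 := fun h => hp (by rw [h, mul_zero])
      have hQ : Qi ε i s ≠ 0 := Qi_ne_zero ε ε₀ h0 h01 h1 hq
      have hcc : ((C.card : ℝ)) ≠ 0 := by
        have : 0 < C.card := Finset.card_pos.2 ⟨x, hx⟩
        exact_mod_cast this.ne'
      rw [prYi, prPairi]
      have hN1 : (0:ℝ) < (Ncnt C (Ai i s) x : ℝ) := by
        have : 0 < Ncnt C (Ai i s) x := Finset.card_pos.2 ⟨x, by simp [Ncnt, hx]⟩
        exact_mod_cast this
      have hN2 : (0:ℝ) < (Ncnt C (insert i (Ai i s)) x : ℝ) := by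
        have : 0 < Ncnt C (insert i (Ai i s)) x := Finset.card_pos.2 ⟨x, by simp [Ncnt, hx]⟩
        exact_mod_cast this
      have harg : ((Ncnt C (Ai i s) x : ℝ) / C.card * Qi ε i s)
          / ((Ncnt C (insert i (Ai i s)) x : ℝ) / C.card * Qi ε i s)
          = (Ncnt C (Ai i s) x : ℝ) / (Ncnt C (insert i (Ai i s)) x : ℝ) := by
        field_simp
      rw [harg, Real.logb_div hN1.ne' hN2.ne']
  rw [Finset.sum_congr rfl (fun x _ => Finset.sum_congr rfl (fun s _ => main x s))]
  rw [Finset.sum_comm]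
  have inner : ∀ s, (∑ x, uC C x * qE ε ε₀ s *
        (Real.logb 2 (Ncnt C (Ai i s) x) - Real.logb 2 (Ncnt C (insert i (Ai i s)) x)))
      = qE ε ε₀ s * (HA C (Ai i s) - HA C (insert i (Ai i s))) := by
    intro s
    have re : ∀ x, uC C x * qE ε ε₀ s *
        (Real.logb 2 (Ncnt C (Ai i s) x) - Real.logb 2 (Ncnt C (insert i (Ai i s)) x))
        = qE ε ε₀ s * (uC C x *
            (Real.logb 2 (Ncnt C (Ai i s) x) - Real.logb 2 (Ncnt C (insert i (Ai i s)) x))) :=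
      fun x => by ring
    rw [Finset.sum_congr rfl (fun x _ => re x), ← Finset.mul_sum, sum_uC_mul]
    congr 1
    unfold HA
    rw [← Finset.sum_sub_distrib]
    apply Finset.sum_congr rfl
    intro x _
    ring
  rw [Finset.sum_congr rfl (fun s _ => inner s)]
  rw [← Finset.sum_fiberwise_of_maps_to (s := univ) (t := (univ.erase i).powerset) (g := Ai i)
    (fun s _ => Finset.mem_powerset.2 (fun j hj => by
      rcases mem_Ai.1 hj with ⟨h1, _⟩
      exact Finset.mem_erase.2 ⟨h1, Finset.mem_univ j⟩))
    (fun s => qE ε ε₀ s * (HA C (Ai i s) - HA C (insert i (Ai i s))))]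
  apply Finset.sum_congr rfl
  intro A hA
  have re2 : ∀ s ∈ univ.filter (fun s : Fin n → Fin 3 => Ai i s = A),
      qE ε ε₀ s * (HA C (Ai i s) - HA C (insert i (Ai i s)))
        = qE ε ε₀ s * (HA C A - HA C (insert i A)) := by
    intro s hs
    rw [(Finset.mem_filter.1 hs).2]
  rw [Finset.sum_congr rfl re2, ← Finset.sum_mul,
    fiber_weight_i ε ε₀ i A (Finset.mem_powerset.1 hA)]


end ExitAux

/-- Entropy bound from the area theorem argument: for a uniformly chosen codeword `X`
of a code `C ⊆ 𝔽₂ⁿ` observed through degraded erasure channels `Y(ε) → Y(ε₀)` with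
`ε < ε₀`, the average EXIT function `h(ε) = (1/n)Σᵢ H(Xᵢ | Y_{∼i}(ε))` satisfies
`n·h(ε) ≤ H(X | Y(ε₀)) / (ε₀ - ε)`. -/
theorem exit_entropy_bound (n : ℕ) (hn : 0 < n)
    (C : Finset (Fin n → ZMod 2)) (hC : C.Nonempty)
    (ε ε₀ : ℝ) (h0 : 0 ≤ ε) (h01 : ε < ε₀) (h1 : ε₀ ≤ 1) :
    (n : ℝ) * ((1 / n) *
        ∑ i : Fin n, condEnt (pCode n C ε ε₀) (fun ω => ω.1 i) (Ynot n i))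
      ≤ condEnt (pCode n C ε ε₀) Prod.fst (Yeps0 n) / (ε₀ - ε) := by
  classical
  have hn' : ((n:ℝ)) ≠ 0 := by exact_mod_cast hn.ne'
  have hpos : (0:ℝ) < ε₀ - ε := by linarith
  -- identify the RHS with Ff
  have hF : condEnt (pCode n C ε ε₀) Prod.fst (Yeps0 n) = ExitAux.Ff C ε₀ := by
    rw [ExitAux.condEnt_Y0 C ε ε₀ h0 h01]
    unfold ExitAux.Ff ExitAux.Wf
    apply Finset.sum_congr rfl
    intro A _
    rw [Finset.card_univ, Fintype.card_fin]
  -- identify the LHS sum with Gf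
  have hG : (∑ i : Fin n, condEnt (pCode n C ε ε₀) (fun ω => ω.1 i) (Ynot n i))
      = ExitAux.Gf C ε := by
    unfold ExitAux.Gf ExitAux.Wf
    apply Finset.sum_congr rfl
    intro i _
    rw [ExitAux.condEnt_Yi C ε ε₀ i h0 h01 h1]
    apply Finset.sum_congr rfl
    intro A _
    rw [Finset.card_erase_of_mem (Finset.mem_univ i), Finset.card_univ, Fintype.card_fin]
    rfl
  rw [hF, hG]
  rw [← mul_assoc, mul_one_div_cancel hn', one_mul]
  rw [le_div_iff₀ hpos, mul_comm]
  exact ExitAux.abstract_bound C h0 h01 h1
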